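/- Let |Ω⟩ be a unit vector in H_Q ⊗ H_{S'}, |ψ⟩ a unit vector in H_Q, and let ω_Q = Tr_{S'}(|Ω⟩⟨Ω|), ω_{S'} = Tr_Q(|Ω⟩⟨Ω|). Then ⟨Ω| (|ψ⟩⟨ψ| ⊗ ω_{S'}) |Ω⟩ ≥ (⟨ψ| ω_Q |ψ⟩)². -/

import Mathlib

open Matrix Kronecker
open scoped ComplexOrder

/-- Time evolution unitary `e^{-iHt}`. -/
noncomputable def timeEvo {ι : Type} [Fintype ι] [DecidableEq ι]
    (H : Matrix ι ι ℂ) (t : ℝ) : Matrix ι ι ℂ :=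
  NormedSpace.exp ((-(Complex.I * (t : ℂ))) • H)

/-- Conjugation `U M U†`. -/
noncomputable def uconj {ι : Type} [Fintype ι] (U M : Matrix ι ι ℂ) : Matrix ι ι ℂ :=
  U * M * Uᴴ

/-- A density operator: positive semidefinite with unit trace. -/
noncomputable def IsState {ι : Type} [Fintype ι] (ρ : Matrix ι ι ℂ) : Prop :=
  ρ.PosSemidef ∧ ρ.trace = 1

/-- Choi matrix of a linear map. -/
noncomputable def choi {ι κ : Type} [Fintype ι] [DecidableEq ι] [Fintype κ]
    (E : Matrix ι ι ℂ →ₗ[ℂ] Matrix κ κ ℂ) : Matrix (ι × κ) (ι × κ) ℂ :=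
  fun p q => E (Matrix.single p.1 q.1 1) p.2 q.2

/-- A quantum channel: completely positive (positive semidefinite Choi matrix)
and trace preserving. -/
noncomputable def IsCPTP {ι κ : Type} [Fintype ι] [DecidableEq ι] [Fintype κ]
    (E : Matrix ι ι ℂ →ₗ[ℂ] Matrix κ κ ℂ) : Prop :=
  (choi E).PosSemidef ∧ ∀ M : Matrix ι ι ℂ, (E M).trace = M.trace

/-- Partial trace over the second (right) tensor factor. -/
noncomputable def ptraceRight {ι κ : Type} [Fintype ι] [Fintype κ]
    (M : Matrix (ι × κ) (ι × κ) ℂ) : Matrix ι ι ℂ :=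
  fun i j => ∑ k, M (i, k) (j, k)

/-- Partial trace over the first (left) tensor factor. -/
noncomputable def ptraceLeft {ι κ : Type} [Fintype ι] [Fintype κ]
    (M : Matrix (ι × κ) (ι × κ) ℂ) : Matrix κ κ ℂ :=
  fun i j => ∑ k, M (k, i) (k, j)

/-- Positive semidefinite square root, extended by `0` to non-PSD matrices. -/
noncomputable def msqrt {ι : Type} [Fintype ι] [DecidableEq ι]
    (M : Matrix ι ι ℂ) : Matrix ι ι ℂ :=
  @dite _ M.PosSemidef (Classical.propDecidable _) (fun h => (h.1.eigenvectorUnitary : Matrix ι ι ℂ) *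
    Matrix.diagonal (fun i => ((Real.sqrt (h.1.eigenvalues i) : ℝ) : ℂ)) *
    (star h.1.eigenvectorUnitary : Matrix ι ι ℂ)) (fun _ => 0)

/-- Trace norm `‖M‖₁ = Tr √(M†M)`. -/
noncomputable def traceNorm {ι : Type} [Fintype ι] [DecidableEq ι]
    (M : Matrix ι ι ℂ) : ℝ :=
  (msqrt (Mᴴ * M)).trace.re

/-- Uhlmann fidelity `Fid(σ,τ) = ‖√σ√τ‖₁`. -/
noncomputable def Fid {ι : Type} [Fintype ι] [DecidableEq ι]
    (σ τ : Matrix ι ι ℂ) : ℝ :=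
  traceNorm (msqrt σ * msqrt τ)

/-- Rank-one projector `|v⟩⟨v|` of a vector. -/
noncomputable def proj {ι : Type} (v : ι → ℂ) : Matrix ι ι ℂ :=
  Matrix.vecMulVec v (star v)

/-- The asymmetry monotone `f_t(ρ) = 1 - Fid(ρ, e^{-iHt} ρ e^{iHt})`. -/
noncomputable def ft {ι : Type} [Fintype ι] [DecidableEq ι]
    (H : Matrix ι ι ℂ) (t : ℝ) (ρ : Matrix ι ι ℂ) : ℝ :=
  1 - Fid ρ (uconj (timeEvo H t) ρ)


private lemma sum_comm3' {α β γ M : Type*} [Fintype α] [Fintype β] [Fintype γ]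
    [AddCommMonoid M] (f : α → β → γ → M) :
    ∑ a, ∑ b, ∑ c, f a b c = ∑ c, ∑ a, ∑ b, f a b c := by
  rw [show (∑ a, ∑ b, ∑ c, f a b c) = ∑ a, ∑ c, ∑ b, f a b c from
    Finset.sum_congr rfl fun a _ => Finset.sum_comm, Finset.sum_comm]

/-- For a bipartite unit vector `Ω` with marginals `ω_Q, ω_{S'}` and a unit
vector `ψ`, one has `⟨Ω|(|ψ⟩⟨ψ| ⊗ ω_{S'})|Ω⟩ ≥ (⟨ψ|ω_Q|ψ⟩)²`. -/
theorem overlap_bound_for_pure_bipartite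
    {Q S' : Type} [Fintype Q] [DecidableEq Q] [Fintype S'] [DecidableEq S']
    (Ω : Q × S' → ℂ) (hΩ : star Ω ⬝ᵥ Ω = 1)
    (ψ : Q → ℂ) (hψ : star ψ ⬝ᵥ ψ = 1) :
    ((star ψ ⬝ᵥ (ptraceRight (proj Ω) *ᵥ ψ)).re) ^ 2
      ≤ (star Ω ⬝ᵥ ((proj ψ ⊗ₖ ptraceLeft (proj Ω)) *ᵥ Ω)).re := by
  classical
  set η : S' → ℂ := fun s => ∑ q, starRingEnd ℂ (ψ q) * Ω (q, s) with hηdef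
  set c : Q → ℂ := fun q => ∑ s, starRingEnd ℂ (η s) * Ω (q, s) with hcdef
  -- step A
  have hA : star ψ ⬝ᵥ (ptraceRight (proj Ω) *ᵥ ψ) = ∑ k, η k * starRingEnd ℂ (η k) := by
    simp only [dotProduct, mulVec, ptraceRight, proj, vecMulVec, Pi.star_apply, map_sum,
      _root_.map_mul, Finset.mul_sum, Finset.sum_mul, Matrix.of_apply, hηdef,
      Complex.star_def, RingHomCompTriple.comp_apply, RingHom.id_apply, starRingEnd_self_apply]
    rw [sum_comm3']
    refine Finset.sum_congr rfl fun k _ => ?_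
    rw [Finset.sum_comm]
    exact Finset.sum_congr rfl fun i _ => Finset.sum_congr rfl fun j _ => by ring
  -- expressions for c
  have hc1 : ∀ q, c q = ∑ p : Q × S', ψ p.1 * starRingEnd ℂ (Ω p) * Ω (q, p.2) := by
    intro q
    rw [Fintype.sum_prod_type, Finset.sum_comm]
    simp only [hcdef, hηdef, map_sum, _root_.map_mul, Finset.sum_mul,
      RingHomCompTriple.comp_apply, RingHom.id_apply, starRingEnd_self_apply]
  have hc2 : ∀ q, starRingEnd ℂ (c q)
      = ∑ r : Q × S', starRingEnd ℂ (ψ r.1) * Ω r * starRingEnd ℂ (Ω (q, r.2)) := by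
    intro q
    rw [hc1 q, map_sum]
    exact Finset.sum_congr rfl fun r _ => by
      simp only [_root_.map_mul, starRingEnd_self_apply]
  -- step B
  have hB : star Ω ⬝ᵥ ((proj ψ ⊗ₖ ptraceLeft (proj Ω)) *ᵥ Ω)
      = ∑ q, c q * starRingEnd ℂ (c q) := by
    have hq : ∀ q, c q * starRingEnd ℂ (c q)
        = ∑ p : Q × S', ∑ r : Q × S', (ψ p.1 * starRingEnd ℂ (Ω p) * Ω (q, p.2)) *
            (starRingEnd ℂ (ψ r.1) * Ω r * starRingEnd ℂ (Ω (q, r.2))) := by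
      intro q; rw [hc2 q, hc1 q, Finset.sum_mul_sum]
    simp only [hq]
    rw [← sum_comm3']
    simp only [dotProduct, mulVec, kroneckerMap_apply, ptraceLeft, proj, vecMulVec,
      Pi.star_apply, Matrix.of_apply, Complex.star_def, Finset.mul_sum, Finset.sum_mul]
    refine Finset.sum_congr rfl fun p _ => Finset.sum_congr rfl fun r _ =>
      Finset.sum_congr rfl fun q _ => by ring
  -- step P : the overlap with c
  have hP : ∑ q, starRingEnd ℂ (ψ q) * c q = ∑ k, η k * starRingEnd ℂ (η k) := by
    simp only [hcdef, Finset.mul_sum]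
    rw [Finset.sum_comm]
    refine Finset.sum_congr rfl fun k _ => ?_
    have hk : η k = ∑ q, starRingEnd ℂ (ψ q) * Ω (q, k) := rfl
    rw [hk, Finset.sum_mul]
    exact Finset.sum_congr rfl fun q _ => by ring
  -- real parts
  have hAre : (star ψ ⬝ᵥ (ptraceRight (proj Ω) *ᵥ ψ)).re = ∑ k, Complex.normSq (η k) := by
    rw [hA]; simp [Complex.mul_conj, Complex.re_sum]
  have hBre : (star Ω ⬝ᵥ ((proj ψ ⊗ₖ ptraceLeft (proj Ω)) *ᵥ Ω)).re
      = ∑ q, Complex.normSq (c q) := by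
    rw [hB]; simp [Complex.mul_conj, Complex.re_sum]
  rw [hAre, hBre]
  set P : ℝ := ∑ k, Complex.normSq (η k) with hPdef
  have hP0 : 0 ≤ P := Finset.sum_nonneg fun k _ => Complex.normSq_nonneg _
  have hPle : P ≤ ∑ q, ‖ψ q‖ * ‖c q‖ := by
    have h1 : P = (∑ q, starRingEnd ℂ (ψ q) * c q).re := by
      rw [hP]; simp [hPdef, Complex.mul_conj, Complex.re_sum]
    rw [h1]
    refine le_trans (Complex.re_le_norm _) ?_
    refine le_trans (norm_sum_le _ _) ?_
    refine le_of_eq (Finset.sum_congr rfl fun q _ => ?_)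
    simp
  have hψ1 : ∑ q, ‖ψ q‖ ^ 2 = 1 := by
    have : (star ψ ⬝ᵥ ψ).re = 1 := by rw [hψ]; simp
    rw [← this]
    simp [dotProduct, Complex.re_sum, Complex.sq_norm, Complex.mul_conj', Complex.normSq_apply]
  calc P ^ 2 ≤ (∑ q, ‖ψ q‖ * ‖c q‖) ^ 2 := by
        exact pow_le_pow_left₀ hP0 hPle 2
    _ ≤ (∑ q, ‖ψ q‖ ^ 2) * ∑ q, ‖c q‖ ^ 2 :=
        Finset.sum_mul_sq_le_sq_mul_sq _ _ _
    _ = ∑ q, Complex.normSq (c q) := by rw [hψ1, one_mul]; simp [Complex.sq_norm]
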